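/- Let X = (X_1, …, X_m) be an associated random vector and let x_1, …, x_m be real numbers. Then P(X_j > x_j for all 1 ≤ j ≤ m) − ∏_{j=1}^m P(X_j > x_j) ≤ Σ_{1 ≤ j < k ≤ m} ( P(X_j > x_j, X_k > x_k) − P(X_j > x_j) P(X_k > x_k) ). -/

import Mathlib

open MeasureTheory

/-- A random vector `X = (X_1, …, X_m)` is associated if `Cov[h₁(X), h₂(X)] ≥ 0` for every
pair of functions `h₁, h₂ : ℝ^m → ℝ` that are nondecreasing in every coordinate and such that
`h₁(X), h₂(X) ∈ L²`. -/
def IsAssociated {Ω : Type*} [MeasurableSpace Ω] (μ : Measure Ω) {m : ℕ}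
    (X : Fin m → Ω → ℝ) : Prop :=
  ∀ h₁ h₂ : (Fin m → ℝ) → ℝ,
    (∀ x y : Fin m → ℝ, (∀ i, x i ≤ y i) → h₁ x ≤ h₁ y) →
    (∀ x y : Fin m → ℝ, (∀ i, x i ≤ y i) → h₂ x ≤ h₂ y) →
    MemLp (fun ω => h₁ fun i => X i ω) 2 μ →
    MemLp (fun ω => h₂ fun i => X i ω) 2 μ →
    0 ≤ ∫ ω, ((h₁ fun i => X i ω) - ∫ ω', (h₁ fun i => X i ω') ∂μ) *
        ((h₂ fun i => X i ω) - ∫ ω', (h₂ fun i => X i ω') ∂μ) ∂μ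


section AuxAssoc

set_option linter.unusedSectionVars false

variable {Ω : Type*} [MeasurableSpace Ω] {μ : Measure Ω}

lemma aux_integrable_of_bdd [IsFiniteMeasure μ] {f : Ω → ℝ} (hf : Measurable f)
    (hb : ∀ ω, |f ω| ≤ 1) : Integrable f μ :=
  memLp_one_iff_integrable.mp
    (MemLp.of_bound hf.aestronglyMeasurable 1 (Filter.Eventually.of_forall hb))

lemma aux_cov_expand [IsProbabilityMeasure μ] {f g : Ω → ℝ}
    (hf : Integrable f μ) (hg : Integrable g μ)
    (hfg : Integrable (fun ω => f ω * g ω) μ) :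
    ∫ ω, (f ω - ∫ ω', f ω' ∂μ) * (g ω - ∫ ω', g ω' ∂μ) ∂μ
      = (∫ ω, f ω * g ω ∂μ) - (∫ ω, f ω ∂μ) * (∫ ω, g ω ∂μ) := by
  set a := ∫ ω', f ω' ∂μ with ha
  set b := ∫ ω', g ω' ∂μ with hb
  have h1 : ∀ ω, (f ω - a) * (g ω - b)
      = f ω * g ω - (a * g ω + b * f ω) + a * b := by intro ω; ring
  simp_rw [h1]
  have hI2 : Integrable (fun ω => a * g ω + b * f ω) μ :=
    (hg.const_mul a).add (hf.const_mul b)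
  have hI1 : Integrable (fun ω => f ω * g ω - (a * g ω + b * f ω)) μ := hfg.sub hI2
  rw [integral_add hI1 (integrable_const _), integral_sub hfg hI2,
    integral_add (hg.const_mul a) (hf.const_mul b),
    integral_const_mul, integral_const_mul, integral_const]
  simp
  ring

lemma aux_assoc_le [IsProbabilityMeasure μ] {m : ℕ} {X : Fin m → Ω → ℝ}
    (hXmeas : ∀ i, Measurable (X i)) (hX : IsAssociated μ X)
    {h₁ h₂ : (Fin m → ℝ) → ℝ}
    (m₁ : ∀ x y : Fin m → ℝ, (∀ i, x i ≤ y i) → h₁ x ≤ h₁ y)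
    (m₂ : ∀ x y : Fin m → ℝ, (∀ i, x i ≤ y i) → h₂ x ≤ h₂ y)
    (meas₁ : Measurable h₁) (meas₂ : Measurable h₂)
    (b₁ : ∀ v, |h₁ v| ≤ 1) (b₂ : ∀ v, |h₂ v| ≤ 1) :
    (∫ ω, h₁ (fun i => X i ω) ∂μ) * (∫ ω, h₂ (fun i => X i ω) ∂μ)
      ≤ ∫ ω, h₁ (fun i => X i ω) * h₂ (fun i => X i ω) ∂μ := by
  have hXm : Measurable (fun ω => (fun i => X i ω)) :=
    measurable_pi_lambda _ hXmeas
  have hm1 : Measurable (fun ω => h₁ (fun i => X i ω)) := meas₁.comp hXm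
  have hm2 : Measurable (fun ω => h₂ (fun i => X i ω)) := meas₂.comp hXm
  have hi1 : Integrable (fun ω => h₁ (fun i => X i ω)) μ :=
    aux_integrable_of_bdd hm1 (fun ω => b₁ _)
  have hi2 : Integrable (fun ω => h₂ (fun i => X i ω)) μ :=
    aux_integrable_of_bdd hm2 (fun ω => b₂ _)
  have hi12 : Integrable (fun ω => h₁ (fun i => X i ω) * h₂ (fun i => X i ω)) μ := by
    refine aux_integrable_of_bdd (hm1.mul hm2) (fun ω => ?_)
    rw [abs_mul]
    calc |h₁ _| * |h₂ _| ≤ 1 * 1 :=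
      mul_le_mul (b₁ _) (b₂ _) (abs_nonneg _) zero_le_one
    _ = 1 := by ring
  have key := hX h₁ h₂ m₁ m₂
    (MemLp.of_bound hm1.aestronglyMeasurable 1 (Filter.Eventually.of_forall fun ω => b₁ _))
    (MemLp.of_bound hm2.aestronglyMeasurable 1 (Filter.Eventually.of_forall fun ω => b₂ _))
  rw [aux_cov_expand hi1 hi2 hi12] at key
  linarith
variable {m : ℕ}

noncomputable def indf (x : Fin m → ℝ) (j : Fin m) (v : Fin m → ℝ) : ℝ := if x j < v j then 1 else 0

noncomputable def prodf (x : Fin m → ℝ) (S : Finset (Fin m)) (v : Fin m → ℝ) : ℝ := ∏ j ∈ S, indf x j v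

lemma indf_nonneg (x : Fin m → ℝ) (j : Fin m) (v : Fin m → ℝ) : 0 ≤ indf x j v := by
  unfold indf; split <;> norm_num

lemma indf_le_one (x : Fin m → ℝ) (j : Fin m) (v : Fin m → ℝ) : indf x j v ≤ 1 := by
  unfold indf; split <;> norm_num

lemma indf_mono (x : Fin m → ℝ) (j : Fin m) :
    ∀ v w : Fin m → ℝ, (∀ i, v i ≤ w i) → indf x j v ≤ indf x j w := by
  intro v w h
  unfold indf
  split
  · rw [if_pos (lt_of_lt_of_le ‹_› (h j))]
  · split <;> norm_num [indf_nonneg]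

lemma indf_meas (x : Fin m → ℝ) (j : Fin m) : Measurable (indf x j) := by
  unfold indf
  exact Measurable.ite (measurableSet_lt measurable_const (measurable_pi_apply j))
    measurable_const measurable_const

lemma prodf_nonneg (x : Fin m → ℝ) (S : Finset (Fin m)) (v : Fin m → ℝ) :
    0 ≤ prodf x S v := Finset.prod_nonneg fun j _ => indf_nonneg x j v

lemma prodf_le_one (x : Fin m → ℝ) (S : Finset (Fin m)) (v : Fin m → ℝ) :
    prodf x S v ≤ 1 :=
  Finset.prod_le_one (fun j _ => indf_nonneg x j v) (fun j _ => indf_le_one x j v)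

lemma prodf_mono (x : Fin m → ℝ) (S : Finset (Fin m)) :
    ∀ v w : Fin m → ℝ, (∀ i, v i ≤ w i) → prodf x S v ≤ prodf x S w := by
  intro v w h
  exact Finset.prod_le_prod (fun j _ => indf_nonneg x j v)
    (fun j _ => indf_mono x j v w h)

lemma prodf_meas (x : Fin m → ℝ) (S : Finset (Fin m)) : Measurable (prodf x S) := by
  unfold prodf
  exact Finset.measurable_prod S fun j _ => indf_meas x j

lemma prodf_abs_le_one (x : Fin m → ℝ) (S : Finset (Fin m)) (v : Fin m → ℝ) :
    |prodf x S v| ≤ 1 := abs_le.2 ⟨by linarith [prodf_nonneg x S v], prodf_le_one x S v⟩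

lemma indf_abs_le_one (x : Fin m → ℝ) (j : Fin m) (v : Fin m → ℝ) :
    |indf x j v| ≤ 1 := abs_le.2 ⟨by linarith [indf_nonneg x j v], indf_le_one x j v⟩

/-- `1 - (1-f)(1-h) = f + h - f*h` is nondecreasing. -/
lemma comb_mono (x : Fin m → ℝ) (a : Fin m) (S : Finset (Fin m)) :
    ∀ v w : Fin m → ℝ, (∀ i, v i ≤ w i) →
      indf x a v + prodf x S v - indf x a v * prodf x S v ≤
      indf x a w + prodf x S w - indf x a w * prodf x S w := by
  intro v w h
  have key : (1 - indf x a w) * (1 - prodf x S w) ≤ (1 - indf x a v) * (1 - prodf x S v) :=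
    mul_le_mul (by linarith [indf_mono x a v w h]) (by linarith [prodf_mono x S v w h])
      (by linarith [prodf_le_one x S w]) (by linarith [indf_le_one x a v])
  nlinarith

lemma prodf_insert (x : Fin m → ℝ) {a : Fin m} {S : Finset (Fin m)} (ha : a ∉ S)
    (v : Fin m → ℝ) : prodf x (insert a S) v = indf x a v * prodf x S v :=
  Finset.prod_insert ha

variable [IsProbabilityMeasure μ] {X : Fin m → Ω → ℝ}

lemma aux_int01 [IsFiniteMeasure μ] {f : Ω → ℝ} (hf : Measurable f)
    (h0 : ∀ ω, 0 ≤ f ω) (h1 : ∀ ω, f ω ≤ 1) : Integrable f μ :=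
  aux_integrable_of_bdd hf (fun ω => abs_le.2 ⟨by linarith [h0 ω], h1 ω⟩)

lemma key_ind (hXmeas : ∀ i, Measurable (X i)) (hX : IsAssociated μ X)
    (x : Fin m → ℝ) (k : Fin m) (S : Finset (Fin m)) :
    (∫ ω, prodf x S (fun i => X i ω) * indf x k (fun i => X i ω) ∂μ)
      - (∫ ω, prodf x S (fun i => X i ω) ∂μ) * (∫ ω, indf x k (fun i => X i ω) ∂μ)
    ≤ ∑ j ∈ S, ((∫ ω, indf x j (fun i => X i ω) * indf x k (fun i => X i ω) ∂μ)
      - (∫ ω, indf x j (fun i => X i ω) ∂μ) * (∫ ω, indf x k (fun i => X i ω) ∂μ)) := by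
  have hXm : Measurable (fun ω => (fun i => X i ω)) := measurable_pi_lambda _ hXmeas
  induction S using Finset.induction_on with
  | empty => simp [prodf]
  | @insert a S ha ih =>
    have hFm : Measurable (fun ω => indf x a (fun i => X i ω)) := (indf_meas x a).comp hXm
    have hHm : Measurable (fun ω => prodf x S (fun i => X i ω)) := (prodf_meas x S).comp hXm
    have hGm : Measurable (fun ω => indf x k (fun i => X i ω)) := (indf_meas x k).comp hXm
    have hF0 : ∀ ω, (0:ℝ) ≤ indf x a (fun i => X i ω) := fun ω => indf_nonneg _ _ _
    have hF1 : ∀ ω, indf x a (fun i => X i ω) ≤ 1 := fun ω => indf_le_one _ _ _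
    have hH0 : ∀ ω, (0:ℝ) ≤ prodf x S (fun i => X i ω) := fun ω => prodf_nonneg _ _ _
    have hH1 : ∀ ω, prodf x S (fun i => X i ω) ≤ 1 := fun ω => prodf_le_one _ _ _
    have hG0 : ∀ ω, (0:ℝ) ≤ indf x k (fun i => X i ω) := fun ω => indf_nonneg _ _ _
    have hG1 : ∀ ω, indf x k (fun i => X i ω) ≤ 1 := fun ω => indf_le_one _ _ _
    have iF : Integrable (fun ω => indf x a (fun i => X i ω)) μ := aux_int01 hFm hF0 hF1
    have iH : Integrable (fun ω => prodf x S (fun i => X i ω)) μ := aux_int01 hHm hH0 hH1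
    have iG : Integrable (fun ω => indf x k (fun i => X i ω)) μ := aux_int01 hGm hG0 hG1
    have iFH : Integrable (fun ω => indf x a (fun i => X i ω) * prodf x S (fun i => X i ω)) μ :=
      aux_int01 (hFm.mul hHm) (fun ω => mul_nonneg (hF0 ω) (hH0 ω))
        (fun ω => mul_le_one₀ (hF1 ω) (hH0 ω) (hH1 ω))
    have iGF : Integrable
        (fun ω => indf x a (fun i => X i ω) * indf x k (fun i => X i ω)) μ :=
      aux_int01 (hFm.mul hGm) (fun ω => mul_nonneg (hF0 ω) (hG0 ω))
        (fun ω => mul_le_one₀ (hF1 ω) (hG0 ω) (hG1 ω))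
    have iGH : Integrable
        (fun ω => prodf x S (fun i => X i ω) * indf x k (fun i => X i ω)) μ :=
      aux_int01 (hHm.mul hGm) (fun ω => mul_nonneg (hH0 ω) (hG0 ω))
        (fun ω => mul_le_one₀ (hH1 ω) (hG0 ω) (hG1 ω))
    have iGFa : Integrable (fun ω =>
        indf x a (fun i => X i ω) * indf x k (fun i => X i ω)
          + prodf x S (fun i => X i ω) * indf x k (fun i => X i ω)) μ := iGF.add iGH
    have iFHa : Integrable (fun ω =>
        indf x a (fun i => X i ω) + prodf x S (fun i => X i ω)) μ := iF.add iH
    have iGFH : Integrable (fun ω =>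
        indf x a (fun i => X i ω) * prodf x S (fun i => X i ω)
          * indf x k (fun i => X i ω)) μ :=
      aux_int01 ((hFm.mul hHm).mul hGm)
        (fun ω => mul_nonneg (mul_nonneg (hF0 ω) (hH0 ω)) (hG0 ω))
        (fun ω => mul_le_one₀ (mul_le_one₀ (hF1 ω) (hH0 ω) (hH1 ω)) (hG0 ω) (hG1 ω))
    have assoc := aux_assoc_le hXmeas hX
      (h₁ := indf x k)
      (h₂ := fun v => indf x a v + prodf x S v - indf x a v * prodf x S v)
      (indf_mono x k) (comb_mono x a S) (indf_meas x k)
      (((indf_meas x a).add (prodf_meas x S)).sub ((indf_meas x a).mul (prodf_meas x S)))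
      (indf_abs_le_one x k)
      (fun v => by
        have h1 := indf_nonneg x a v
        have h2 := indf_le_one x a v
        have h3 := prodf_nonneg x S v
        have h4 := prodf_le_one x S v
        rw [abs_le]
        constructor <;> nlinarith)
    have e1 : (∫ ω, indf x k (fun i => X i ω) *
        ((fun v => indf x a v + prodf x S v - indf x a v * prodf x S v) (fun i => X i ω)) ∂μ)
        = ((∫ ω, indf x a (fun i => X i ω) * indf x k (fun i => X i ω) ∂μ)
          + (∫ ω, prodf x S (fun i => X i ω) * indf x k (fun i => X i ω) ∂μ))
          - ∫ ω, indf x a (fun i => X i ω) * prodf x S (fun i => X i ω)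
              * indf x k (fun i => X i ω) ∂μ := by
      have p : (∫ ω, indf x k (fun i => X i ω) *
          ((fun v => indf x a v + prodf x S v - indf x a v * prodf x S v)
            (fun i => X i ω)) ∂μ)
          = ∫ ω, (indf x a (fun i => X i ω) * indf x k (fun i => X i ω)
              + prodf x S (fun i => X i ω) * indf x k (fun i => X i ω))
            - indf x a (fun i => X i ω) * prodf x S (fun i => X i ω)
              * indf x k (fun i => X i ω) ∂μ :=
        integral_congr_ae (Filter.Eventually.of_forall fun ω => by dsimp only; try ring)
      rw [p, integral_sub iGFa iGFH, integral_add iGF iGH]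
    have e2 : (∫ ω, (fun v => indf x a v + prodf x S v - indf x a v * prodf x S v)
        (fun i => X i ω) ∂μ)
        = ((∫ ω, indf x a (fun i => X i ω) ∂μ) + (∫ ω, prodf x S (fun i => X i ω) ∂μ))
          - ∫ ω, indf x a (fun i => X i ω) * prodf x S (fun i => X i ω) ∂μ := by
      have p : (∫ ω, (fun v => indf x a v + prodf x S v - indf x a v * prodf x S v)
          (fun i => X i ω) ∂μ)
          = ∫ ω, (indf x a (fun i => X i ω) + prodf x S (fun i => X i ω))
            - indf x a (fun i => X i ω) * prodf x S (fun i => X i ω) ∂μ :=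
        integral_congr_ae (Filter.Eventually.of_forall fun ω => by dsimp only; try ring)
      rw [p, integral_sub iFHa iFH, integral_add iF iH]
    rw [e1, e2] at assoc
    have e3 : (∫ ω, prodf x (insert a S) (fun i => X i ω) * indf x k (fun i => X i ω) ∂μ)
        = ∫ ω, indf x a (fun i => X i ω) * prodf x S (fun i => X i ω)
            * indf x k (fun i => X i ω) ∂μ :=
      integral_congr_ae (Filter.Eventually.of_forall fun ω => by dsimp only; try rw [prodf_insert x ha])
    have e4 : (∫ ω, prodf x (insert a S) (fun i => X i ω) ∂μ)
        = ∫ ω, indf x a (fun i => X i ω) * prodf x S (fun i => X i ω) ∂μ :=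
      integral_congr_ae (Filter.Eventually.of_forall fun ω => by dsimp only; try rw [prodf_insert x ha])
    rw [e3, e4, Finset.sum_insert ha]
    linarith [ih]

lemma aux_int_ite {P : Ω → Prop} [DecidablePred P] [IsProbabilityMeasure μ]
    (hP : MeasurableSet {ω | P ω}) :
    ∫ ω, (if P ω then (1:ℝ) else 0) ∂μ = (μ {ω | P ω}).toReal := by
  have h : (fun ω => if P ω then (1:ℝ) else 0)
      = Set.indicator {ω | P ω} (fun _ => (1:ℝ)) := by
    funext ω
    by_cases h : P ω <;> simp [Set.indicator_apply, h]
  rw [h, integral_indicator_const (1:ℝ) hP]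
  simp
  rfl

lemma aux_mset (hXmeas : ∀ i, Measurable (X i)) (x : Fin m → ℝ) (j : Fin m) :
    MeasurableSet {ω | x j < X j ω} :=
  measurableSet_lt measurable_const (hXmeas j)

lemma aux_int_indf (hXmeas : ∀ i, Measurable (X i)) (x : Fin m → ℝ) (j : Fin m) :
    ∫ ω, indf x j (fun i => X i ω) ∂μ = (μ {ω | x j < X j ω}).toReal := by
  classical
  have : (fun ω => indf x j (fun i => X i ω)) = fun ω => if x j < X j ω then (1:ℝ) else 0 := by
    funext ω; simp [indf]
  rw [this, aux_int_ite (aux_mset hXmeas x j)]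

lemma aux_int_indf_mul (hXmeas : ∀ i, Measurable (X i)) (x : Fin m → ℝ) (j k : Fin m) :
    ∫ ω, indf x j (fun i => X i ω) * indf x k (fun i => X i ω) ∂μ
      = (μ {ω | x j < X j ω ∧ x k < X k ω}).toReal := by
  classical
  have : (fun ω => indf x j (fun i => X i ω) * indf x k (fun i => X i ω))
      = fun ω => if (x j < X j ω ∧ x k < X k ω) then (1:ℝ) else 0 := by
    funext ω
    by_cases h1 : x j < X j ω <;> by_cases h2 : x k < X k ω <;> simp [indf, h1, h2]
  rw [this, aux_int_ite]
  have : {ω | x j < X j ω ∧ x k < X k ω} = {ω | x j < X j ω} ∩ {ω | x k < X k ω} := rfl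
  rw [this]
  exact (aux_mset hXmeas x j).inter (aux_mset hXmeas x k)

lemma aux_int_prodf (hXmeas : ∀ i, Measurable (X i)) (x : Fin m → ℝ) (S : Finset (Fin m)) :
    ∫ ω, prodf x S (fun i => X i ω) ∂μ = (μ {ω | ∀ j ∈ S, x j < X j ω}).toReal := by
  classical
  have hp : (fun ω => prodf x S (fun i => X i ω))
      = fun ω => if (∀ j ∈ S, x j < X j ω) then (1:ℝ) else 0 := by
    funext ω
    simp [prodf, indf, Finset.prod_boole]
  rw [hp, aux_int_ite]
  have hs : {ω | ∀ j ∈ S, x j < X j ω} = ⋂ j ∈ (S : Set (Fin m)), {ω | x j < X j ω} := by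
    ext ω; simp
  rw [hs]
  exact MeasurableSet.biInter S.countable_toSet fun j _ => aux_mset hXmeas x j

end AuxAssoc

/-- For an associated random vector `X = (X_1, …, X_m)` and reals `x_1, …, x_m`,
`P(∀ j, X_j > x_j) - ∏_j P(X_j > x_j)
  ≤ ∑_{j < k} (P(X_j > x_j, X_k > x_k) - P(X_j > x_j) P(X_k > x_k))`. -/
theorem associated_joint_tail_bound
    {Ω : Type*} [MeasurableSpace Ω] (μ : Measure Ω) [IsProbabilityMeasure μ]
    {m : ℕ} (X : Fin m → Ω → ℝ) (hXmeas : ∀ i, Measurable (X i))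
    (hX : IsAssociated μ X) (x : Fin m → ℝ) :
    (μ {ω | ∀ j, x j < X j ω}).toReal - ∏ j, (μ {ω | x j < X j ω}).toReal ≤
      ∑ j : Fin m, ∑ k ∈ Finset.univ.filter (fun k => j < k),
        ((μ {ω | x j < X j ω ∧ x k < X k ω}).toReal -
          (μ {ω | x j < X j ω}).toReal * (μ {ω | x k < X k ω}).toReal) := by

  classical
  have hXm : Measurable (fun ω => (fun i => X i ω)) := measurable_pi_lambda _ hXmeas
  -- abbreviations
  set p : Fin m → ℝ := fun j => (μ {ω | x j < X j ω}).toReal with hp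
  set q : Fin m → Fin m → ℝ :=
    fun j k => (μ {ω | x j < X j ω ∧ x k < X k ω}).toReal with hq
  set Sk : ℕ → Finset (Fin m) := fun n => Finset.univ.filter (fun j => (j : ℕ) < n) with hSk
  set T : ℕ → ℝ := fun n => (∫ ω, prodf x (Sk n) (fun i => X i ω) ∂μ)
      * ∏ j ∈ Finset.univ.filter (fun j : Fin m => n ≤ (j : ℕ)), p j with hT
  have hp0 : ∀ j, 0 ≤ p j := fun j => ENNReal.toReal_nonneg
  have hp1 : ∀ j, p j ≤ 1 := by
    intro j
    rw [hp]
    calc (μ {ω | x j < X j ω}).toReal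
        ≤ (μ Set.univ).toReal :=
          ENNReal.toReal_mono (measure_ne_top μ _) (measure_mono (Set.subset_univ _))
      _ = 1 := by simp
  -- endpoint values
  have hTm : T m = (μ {ω | ∀ j, x j < X j ω}).toReal := by
    have h1 : Sk m = Finset.univ := by
      rw [hSk]; exact Finset.filter_true_of_mem fun j _ => j.isLt
    have h2 : Finset.univ.filter (fun j : Fin m => m ≤ (j : ℕ)) = ∅ := by
      apply Finset.filter_false_of_mem
      intro j _
      exact Nat.not_le.mpr j.isLt
    rw [hT]
    simp only [h1, h2, Finset.prod_empty, mul_one]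
    rw [aux_int_prodf hXmeas x Finset.univ]
    have : {ω | ∀ j ∈ Finset.univ, x j < X j ω} = {ω | ∀ j, x j < X j ω} := by
      ext ω; simp
    rw [this]
  have hT0 : T 0 = ∏ j, p j := by
    have h1 : Sk 0 = ∅ := by
      rw [hSk]; apply Finset.filter_false_of_mem; intro j _; omega
    have h2 : Finset.univ.filter (fun j : Fin m => 0 ≤ (j : ℕ)) = Finset.univ := by
      apply Finset.filter_true_of_mem; intro j _; omega
    rw [hT]
    simp only [h1, h2]
    have : (fun ω => prodf x (∅ : Finset (Fin m)) (fun i => X i ω)) = fun _ => (1:ℝ) := by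
      funext ω; simp [prodf]
    simp only [this, integral_const, measure_univ, probReal_univ, ENNReal.toReal_one, one_smul, smul_eq_mul]
    ring
  -- per-step bound
  have step : ∀ n ∈ Finset.range m, T (n + 1) - T n ≤
      (if h : n < m then
        ∑ j ∈ Sk n, (q j ⟨n, h⟩ - p j * p ⟨n, h⟩) else 0) := by
    intro n hn
    rw [Finset.mem_range] at hn
    rw [dif_pos hn]
    set k : Fin m := ⟨n, hn⟩ with hk
    have hkval : (k : ℕ) = n := rfl
    have hknotin : k ∉ Sk n := by
      rw [hSk]
      simp only [Finset.mem_filter, Finset.mem_univ, true_and, not_lt, hkval]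
      omega
    have hSksucc : Sk (n + 1) = insert k (Sk n) := by
      rw [hSk]
      ext j
      simp only [Finset.mem_filter, Finset.mem_univ, true_and, Finset.mem_insert]
      constructor
      · intro hj
        rcases Nat.lt_succ_iff_lt_or_eq.mp hj with h | h
        · exact Or.inr h
        · exact Or.inl (Fin.ext h)
      · rintro (rfl | hj)
        · omega
        · omega
    have hfiltsucc : Finset.univ.filter (fun j : Fin m => n ≤ (j : ℕ))
        = insert k (Finset.univ.filter (fun j : Fin m => n + 1 ≤ (j : ℕ))) := by
      ext j
      simp only [Finset.mem_filter, Finset.mem_univ, true_and, Finset.mem_insert]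
      constructor
      · intro hj
        rcases Nat.eq_or_lt_of_le hj with h | h
        · exact Or.inl (Fin.ext h.symm)
        · exact Or.inr h
      · rintro (rfl | hj) <;> omega
    have hknotin2 : k ∉ Finset.univ.filter (fun j : Fin m => n + 1 ≤ (j : ℕ)) := by
      simp only [Finset.mem_filter, Finset.mem_univ, true_and, hkval, not_le]
      omega
    -- Q (n+1) as product integral
    have hQsucc : (∫ ω, prodf x (Sk (n+1)) (fun i => X i ω) ∂μ)
        = ∫ ω, prodf x (Sk n) (fun i => X i ω) * indf x k (fun i => X i ω) ∂μ := by
      rw [hSksucc]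
      exact integral_congr_ae (Filter.Eventually.of_forall fun ω => by
        dsimp only; rw [prodf_insert x hknotin]; ring)
    -- covariance nonneg
    have hcov0 : (∫ ω, prodf x (Sk n) (fun i => X i ω) ∂μ) * p k
        ≤ ∫ ω, prodf x (Sk n) (fun i => X i ω) * indf x k (fun i => X i ω) ∂μ := by
      have := aux_assoc_le hXmeas hX (h₁ := prodf x (Sk n)) (h₂ := indf x k)
        (prodf_mono x (Sk n)) (indf_mono x k) (prodf_meas x (Sk n)) (indf_meas x k)
        (prodf_abs_le_one x (Sk n)) (indf_abs_le_one x k)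
      rwa [aux_int_indf hXmeas x k] at this
    -- covariance upper bound
    have hcovB : (∫ ω, prodf x (Sk n) (fun i => X i ω) * indf x k (fun i => X i ω) ∂μ)
        - (∫ ω, prodf x (Sk n) (fun i => X i ω) ∂μ) * p k
        ≤ ∑ j ∈ Sk n, (q j k - p j * p k) := by
      have h := key_ind hXmeas hX x k (Sk n)
      rw [aux_int_indf hXmeas x k] at h
      refine h.trans (le_of_eq (Finset.sum_congr rfl fun j _ => ?_))
      rw [aux_int_indf_mul hXmeas x j k, aux_int_indf hXmeas x j]
    -- R (n+1) bounds
    have hR0 : 0 ≤ ∏ j ∈ Finset.univ.filter (fun j : Fin m => n + 1 ≤ (j : ℕ)), p j :=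
      Finset.prod_nonneg fun j _ => hp0 j
    have hR1 : (∏ j ∈ Finset.univ.filter (fun j : Fin m => n + 1 ≤ (j : ℕ)), p j) ≤ 1 :=
      Finset.prod_le_one (fun j _ => hp0 j) (fun j _ => hp1 j)
    -- put it together
    rw [hT]
    simp only
    rw [hQsucc, hfiltsucc, Finset.prod_insert hknotin2]
    set A := ∫ ω, prodf x (Sk n) (fun i => X i ω) * indf x k (fun i => X i ω) ∂μ
    set B := ∫ ω, prodf x (Sk n) (fun i => X i ω) ∂μ
    set c := ∏ j ∈ Finset.univ.filter (fun j : Fin m => n + 1 ≤ (j : ℕ)), p j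
    have expand : A * c - B * (p k * c) = c * (A - B * p k) := by ring
    rw [expand]
    calc c * (A - B * p k) ≤ 1 * (A - B * p k) :=
          mul_le_mul_of_nonneg_right hR1 (by linarith)
      _ = A - B * p k := one_mul _
      _ ≤ ∑ j ∈ Sk n, (q j k - p j * p k) := hcovB
  -- sum it up
  have tele : T m - T 0 = ∑ n ∈ Finset.range m, (T (n + 1) - T n) :=
    (Finset.sum_range_sub T m).symm
  have sum_le : ∑ n ∈ Finset.range m, (T (n + 1) - T n)
      ≤ ∑ n ∈ Finset.range m, (if h : n < m then
          ∑ j ∈ Sk n, (q j ⟨n, h⟩ - p j * p ⟨n, h⟩) else 0) :=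
    Finset.sum_le_sum step
  have reindex : (∑ n ∈ Finset.range m, (if h : n < m then
      ∑ j ∈ Sk n, (q j ⟨n, h⟩ - p j * p ⟨n, h⟩) else 0))
      = ∑ k : Fin m, ∑ j ∈ Finset.univ.filter (fun j => j < k), (q j k - p j * p k) := by
    rw [← Fin.sum_univ_eq_sum_range (fun n => if h : n < m then
      ∑ j ∈ Sk n, (q j ⟨n, h⟩ - p j * p ⟨n, h⟩) else 0) m]
    refine Finset.sum_congr rfl fun k _ => ?_
    rw [dif_pos k.isLt]
    have h1 : (⟨(k : ℕ), k.isLt⟩ : Fin m) = k := Fin.eta k k.isLt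
    rw [h1]
    refine Finset.sum_congr ?_ fun j _ => rfl
    rw [hSk]
    apply Finset.filter_congr
    intro j _
    exact Iff.rfl
  have swap : (∑ k : Fin m, ∑ j ∈ Finset.univ.filter (fun j => j < k), (q j k - p j * p k))
      = ∑ j : Fin m, ∑ k ∈ Finset.univ.filter (fun k => j < k), (q j k - p j * p k) := by
    refine Finset.sum_comm' ?_
    intro a b
    simp only [Finset.mem_univ, Finset.mem_filter, true_and, and_true]
  rw [← hTm, ← hT0]
  calc T m - T 0 = ∑ n ∈ Finset.range m, (T (n + 1) - T n) := tele
    _ ≤ _ := sum_le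
    _ = _ := reindex
    _ = _ := swap
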